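/- For a word x over alphabet A and a letter a ∈ A, the following are equivalent: (1) x has no factor aa (i.e., aa does not occur as two consecutive letters of x); (2) for every word z, if [a,a] ⊑ z, π_{A∖{a}}(x) ⊑ z, and z ⊑ x, then there exists a letter b ≠ a such that [a,b,a] ⊑ z. -/

import Mathlib

lemma block_of_no_ba {A : Type*} [DecidableEq A] (a : A) :
    ∀ w : List A, a ∈ w → (∀ b : A, b ≠ a → ¬ [b, a].Sublist w) →
      ∃ j v, w = List.replicate j a ++ v ∧ 1 ≤ j ∧ a ∉ v := by
  intro w
  induction w with
  | nil => simp
  | cons c w' ih =>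
    intro hmem hno
    by_cases hc : c = a
    · by_cases hm : a ∈ w'
      · obtain ⟨j, v, hw, hj, hv⟩ := ih hm (fun b hb hs => hno b hb (hs.cons c))
        exact ⟨j + 1, v, by simp [hw, List.replicate_succ, hc], by omega, hv⟩
      · exact ⟨1, w', by simp [List.replicate, hc], le_refl _, hm⟩
    · exfalso
      have hm : a ∈ w' := by
        rcases List.mem_cons.mp hmem with h | h
        · exact absurd h.symm hc
        · exact h
      exact hno c hc (List.cons_sublist_cons.mpr (List.singleton_sublist.mpr hm))

lemma block_of_no_aba {A : Type*} [DecidableEq A] (a : A) :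
    ∀ z : List A, [a, a].Sublist z → (∀ b : A, b ≠ a → ¬ [a, b, a].Sublist z) →
      ∃ u k v, z = u ++ List.replicate k a ++ v ∧ 2 ≤ k ∧ a ∉ u ∧ a ∉ v := by
  intro z
  induction z with
  | nil => intro h; exact absurd h (by simp)
  | cons c z' ih =>
    intro haa hno
    by_cases hc : c = a
    · have hmem : a ∈ z' := by
        rw [hc] at haa
        have h1 : ([a] : List A).Sublist z' :=
          (List.cons_sublist_cons (a := a)).mp (by simpa using haa)
        simpa using h1
      have hno' : ∀ b : A, b ≠ a → ¬ [b, a].Sublist z' := by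
        intro b hb hs
        have : [a, b, a].Sublist (c :: z') := by
          rw [hc]; exact List.cons_sublist_cons.mpr hs
        exact hno b hb this
      obtain ⟨j, v, hw, hj, hv⟩ := block_of_no_ba a z' hmem hno'
      exact ⟨[], j + 1, v, by simp [hw, List.replicate_succ, hc], by omega, by simp, hv⟩
    · have haa' : [a, a].Sublist z' := by
        rcases List.sublist_cons_iff.mp haa with h | ⟨r, hr, _⟩
        · exact h
        · exact absurd (by injection hr with h _; exact h.symm) hc
      obtain ⟨u, k, v, hz, hk, hu, hv⟩ :=
        ih haa' (fun b hb hs => hno b hb (hs.cons c))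
      refine ⟨c :: u, k, v, by simp [hz], hk, ?_, hv⟩
      simp only [List.mem_cons]
      rintro (h | h)
      · exact hc h.symm
      · exact hu h

theorem no_factor_aa_iff {A : Type*} [DecidableEq A] (x : List A) (a : A) :
    (¬ ∃ v w : List A, x = v ++ [a, a] ++ w) ↔
      (∀ z : List A, [a, a].Sublist z →
        (x.filter (fun c => decide (c ≠ a))).Sublist z → z.Sublist x →
          ∃ b : A, b ≠ a ∧ [a, b, a].Sublist z) := by
  set p : A → Bool := fun c => decide (c ≠ a) with hp
  have hfreeu : ∀ (l : List A), a ∉ l → l.filter p = l := fun l hl =>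
    List.filter_eq_self.mpr (fun c hc => by
      simp only [hp, decide_eq_true_eq]
      rintro rfl; exact hl hc)
  constructor
  · intro hnf z haa hpx hzx
    by_contra hcon
    push_neg at hcon
    obtain ⟨u, k, v, hz, hk, hu, hv⟩ :=
      block_of_no_aba a z haa (fun b hb hs => hcon b hb hs)
    have hzf : z.filter p = u ++ v := by
      have hrep : (List.replicate k a).filter p = [] := by
        simp [List.filter_eq_nil_iff, hp]
      simp [hz, List.filter_append, hfreeu u hu, hfreeu v hv, hrep]
    have hidem : (x.filter p).filter p = x.filter p :=
      List.filter_eq_self.mpr (fun c hc => (List.mem_filter.mp hc).2)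
    have hfeq : z.filter p = x.filter p :=
      (hzx.filter p).antisymm (hidem ▸ hpx.filter p)
    rw [hz] at hzx
    obtain ⟨x1, rest, hx, hux1, hrest⟩ := List.append_sublist_iff.mp
      (by simpa [List.append_assoc] using hzx)
    obtain ⟨x2, x3, hrest2, hrx2, hvx3⟩ := List.append_sublist_iff.mp hrest
    subst hrest2
    have hlu : u.length ≤ (x1.filter p).length := by
      have h1 : (u.filter p).Sublist (x1.filter p) := hux1.filter p
      simpa [hfreeu u hu] using h1.length_le
    have hlv : v.length ≤ (x3.filter p).length := by
      have h1 : (v.filter p).Sublist (x3.filter p) := hvx3.filter p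
      simpa [hfreeu v hv] using h1.length_le
    have hlx : (x.filter p).length = u.length + v.length := by
      rw [← hfeq, hzf]; simp
    have hx2nil : (x2.filter p).length = 0 := by
      have h1 : x.filter p = x1.filter p ++ x2.filter p ++ x3.filter p := by
        simp [hx, List.filter_append]
      have := congrArg List.length h1
      simp only [List.length_append] at this
      omega
    have hx2a : ∀ c ∈ x2, c = a := by
      intro c hc
      by_contra hca
      have : c ∈ x2.filter p := List.mem_filter.mpr ⟨hc, by simp [hp, hca]⟩
      rw [List.length_eq_zero_iff.mp hx2nil] at this
      simp at this
    have hx2len : 2 ≤ x2.length := by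
      have := hrx2.length_le
      simp only [List.length_replicate] at this
      omega
    obtain ⟨c1, t1, rfl⟩ : ∃ c1 t1, x2 = c1 :: t1 := by
      cases x2 with
      | nil => simp at hx2len
      | cons c t => exact ⟨c, t, rfl⟩
    obtain ⟨c2, t2, rfl⟩ : ∃ c2 t2, t1 = c2 :: t2 := by
      cases t1 with
      | nil => simp at hx2len
      | cons c t => exact ⟨c, t, rfl⟩
    have h1 : c1 = a := hx2a c1 (by simp)
    have h2 : c2 = a := hx2a c2 (by simp)
    exact hnf ⟨x1, t2 ++ x3, by simp [hx, h1, h2]⟩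
  · rintro h ⟨v, w, rfl⟩
    set z : List A := v.filter p ++ [a, a] ++ w.filter p with hzdef
    have haa : [a, a].Sublist z := by
      have h1 : (([] : List A) ++ [a, a] ++ []).Sublist z :=
        ((List.nil_sublist _).append (List.Sublist.refl _)).append (List.nil_sublist _)
      simpa using h1
    have hrepeq : ([a, a] : List A).filter p = [] := by simp [hp]
    have hpx : ((v ++ [a, a] ++ w).filter p).Sublist z := by
      have h1 : (v.filter p ++ ([] : List A) ++ w.filter p).Sublist z :=
        ((List.Sublist.refl _).append (List.nil_sublist _)).append (List.Sublist.refl _)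
      simpa [List.filter_append, hrepeq, hp] using h1
    have hzx : z.Sublist (v ++ [a, a] ++ w) :=
      ((List.filter_sublist : (v.filter p).Sublist v).append (List.Sublist.refl _)).append (List.filter_sublist : (w.filter p).Sublist w)
    obtain ⟨b, hb, hs⟩ := h z haa hpx hzx
    have hufree : ∀ c ∈ v.filter p, c ≠ a := by
      intro c hc
      have := (List.mem_filter.mp hc).2
      simpa [hp] using this
    have hvfree : ∀ c ∈ w.filter p, c ≠ a := by
      intro c hc
      have := (List.mem_filter.mp hc).2
      simpa [hp] using this
    have hs' : [a, b, a].Sublist ([a, a] ++ w.filter p) := by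
      rw [hzdef, List.append_assoc] at hs
      clear_value z
      generalize hq : v.filter p = q at hs hufree
      clear hq
      induction q with
      | nil => simpa using hs
      | cons c q' ih =>
        rcases List.sublist_cons_iff.mp hs with h' | ⟨r, hr, _⟩
        · exact ih h' (fun d hd => hufree d (by simp [hd]))
        · exact absurd (by injection hr with h1 _; exact h1.symm)
            (hufree c (by simp))
    have hba : [b, a].Sublist (a :: w.filter p) :=
      (List.cons_sublist_cons (a := a)).mp (by simpa using hs')
    rcases List.sublist_cons_iff.mp hba with h' | ⟨r, hr, _⟩
    · have : a ∈ w.filter p := by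
        have h2 : [a].Sublist (w.filter p) := (List.sublist_cons_self b [a]).trans h'
        simpa using h2
      exact hvfree a this rfl
    · obtain ⟨h1, -⟩ := List.cons_eq_cons.mp hr
      exact hb h1
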